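/- Let G be a finite dominant set of monomials (every element of G is dominant with respect to G). If L₁, L₂ ⊆ G satisfy lcm(L₁) = lcm(L₂), then L₁ = L₂. In other words, the map sending a subset of G to its lcm is injective on subsets of a dominant set. -/

import Mathlib

open Finset

variable {X : Type*} [DecidableEq X]

/-- The lcm of a finite set of monomials (monomials = finitely supported
exponent functions): pointwise maximum of exponents. -/
noncomputable def mlcm (L : Finset (X →₀ ℕ)) : X →₀ ℕ := L.sup id

/-- `m` is dominant with respect to `G`: some variable `x` appears in `m`
with exponent at least `k > 0` while every other element of `G` has
`x`-exponent `< k`. -/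
def Dominant (G : Finset (X →₀ ℕ)) (m : X →₀ ℕ) : Prop :=
  ∃ x : X, ∃ k : ℕ, 0 < k ∧ k ≤ m x ∧ ∀ m' ∈ G, m' ≠ m → m' x < k

/-- Total degree of a monomial: sum of its exponents. -/
def mdeg (m : X →₀ ℕ) : ℕ := m.sum fun _ e => e

lemma mlcm_apply (L : Finset (X →₀ ℕ)) (x : X) :
    mlcm L x = L.sup fun m => m x := by
  classical
  induction L using Finset.induction with
  | empty => simp [mlcm]; rfl
  | insert _ _ h ih =>
    rw [mlcm, Finset.sup_insert, Finset.sup_insert, ← ih, mlcm]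
    simp [Finsupp.sup_apply]

lemma subset_of_mlcm_le {G L₁ L₂ : Finset (X →₀ ℕ)} (hdom : ∀ m ∈ G, Dominant G m)
    (h1 : L₁ ⊆ G) (h2 : L₂ ⊆ G) (hle : mlcm L₁ ≤ mlcm L₂) : L₁ ⊆ L₂ := by
  intro m hm
  obtain ⟨x, k, hk0, hkm, hlt⟩ := hdom m (h1 hm)
  have h₁ : k ≤ mlcm L₂ x := by
    calc k ≤ m x := hkm
    _ ≤ mlcm L₁ x := by rw [mlcm_apply]; exact Finset.le_sup (f := fun m => m x) hm
    _ ≤ mlcm L₂ x := hle x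
  rw [mlcm_apply, Finset.le_sup_iff hk0] at h₁
  obtain ⟨m', hm', hk'⟩ := h₁
  rcases eq_or_ne m' m with rfl | hne
  · exact hm'
  · exact absurd hk' (not_le.mpr (hlt m' (h2 hm') hne))

theorem lcm_injective_of_dominant (G : Finset (X →₀ ℕ)) (hdom : ∀ m ∈ G, Dominant G m)
    (L₁ L₂ : Finset (X →₀ ℕ)) (h1 : L₁ ⊆ G) (h2 : L₂ ⊆ G)
    (hlcm : mlcm L₁ = mlcm L₂) : L₁ = L₂ :=
  Finset.Subset.antisymm (subset_of_mlcm_le hdom h1 h2 hlcm.le)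
    (subset_of_mlcm_le hdom h2 h1 hlcm.ge)
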